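/- Let d ≥ 1 and let a, b ∈ (ℕ∪{0})^d be multi-indices. Define the tensor Θ_{a,b}(j,k,ℓ) := (2πik)^a (2πiℓ)^b if j = k + ℓ and Θ_{a,b}(j,k,ℓ) := 0 otherwise, where (2πik)^a = Π_{m=1}^d (2πi k_m)^{a_m}. Then Θ_{a,b} ∈ BT^{|a|+|b|+2N, N}(ℤ^d) for every N ∈ ℕ. (Θ_{a,b} is the tensor on the Fourier side of the bilinear partial differential operator T_{a,b}(F,G) = (∂^a F)(∂^b G) on the torus 𝕋^d.) -/

import Mathlib

open scoped ENNReal NNReal BigOperators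

noncomputable section

/-- The integer lattice `ℤ^d`. -/
abbrev Zd (d : ℕ) := Fin d → ℤ

/-- Euclidean norm `|j|` of an integer vector `j ∈ ℤ^d`. -/
def znorm {d : ℕ} (j : Zd d) : ℝ := Real.sqrt (∑ i, ((j i : ℝ)) ^ 2)

/-- Euclidean norm of a real vector. -/
def rnorm {d : ℕ} (x : Fin d → ℝ) : ℝ := Real.sqrt (∑ i, (x i) ^ 2)

/-- Japanese bracket `⟨x⟩ = (1 + x²)^{1/2}`. -/
def jb (x : ℝ) : ℝ := Real.sqrt (1 + x ^ 2)

/-- The discrete bilinear operator `𝒯_Θ` (named `Tbil` here) associated with an infinite tensor `Θ`: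
`(𝒯_Θ(f,g))_j = Σ_k Σ_ℓ Θ(j,k,ℓ) f_k g_ℓ`. -/
def Tbil {d : ℕ} (Θ : Zd d → Zd d → Zd d → ℂ) (f g : Zd d → ℂ) : Zd d → ℂ :=
  fun j => ∑' k, ∑' l, Θ j k l * f k * g l

/-- `ℓ^p`-type norm (extended-real valued) of a family of nonnegative extended reals,
with the usual modification (supremum) when `p = ∞`. -/
def nestNorm {ι : Type*} (p : ℝ≥0∞) (F : ι → ℝ≥0∞) : ℝ≥0∞ :=
  if p = ∞ then ⨆ i, F i else (∑' i, F i ^ p.toReal) ^ (1 / p.toReal)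

/-- The weighted `ℓ^p_s(ℤ^d)` norm `(Σ_k ⟨k⟩^{sp} |f_k|^p)^{1/p}`. -/
def wlpNorm {d : ℕ} (p : ℝ≥0∞) (s : ℝ) (f : Zd d → ℂ) : ℝ≥0∞ :=
  nestNorm p fun k => ENNReal.ofReal (jb (znorm k) ^ s * ‖f k‖)

/-- The `ℓ^p(ℤ^d)` norm. -/
def lpNorm {d : ℕ} (p : ℝ≥0∞) (f : Zd d → ℂ) : ℝ≥0∞ :=
  nestNorm p fun k => ENNReal.ofReal ‖f k‖

/-- The tensor norm `‖Θ‖_{ω,N} = sup_{j,k,ℓ} |Θ(j,k,ℓ)| ⟨|j−k|+|j−ℓ|⟩^{2N} /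
(⟨|j|+|k|⟩^ω ⟨|j|+|ℓ|⟩^ω)`. -/
def tensorNorm {d : ℕ} (ω N : ℝ) (Θ : Zd d → Zd d → Zd d → ℂ) : ℝ≥0∞ :=
  ⨆ j, ⨆ k, ⨆ l, ENNReal.ofReal
    (‖Θ j k l‖ * jb (znorm (j - k) + znorm (j - l)) ^ (2 * N) /
      (jb (znorm j + znorm k) ^ ω * jb (znorm j + znorm l) ^ ω))

/-- The tensor norm `‖Θ‖_{ω₁,ω₂,N}`. -/
def tensorNorm2 {d : ℕ} (ω₁ ω₂ N : ℝ) (Θ : Zd d → Zd d → Zd d → ℂ) : ℝ≥0∞ :=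
  ⨆ j, ⨆ k, ⨆ l, ENNReal.ofReal
    (‖Θ j k l‖ * jb (znorm (j - k) + znorm (j - l)) ^ (2 * N) /
      (jb (znorm j + znorm k) ^ ω₁ * jb (znorm j + znorm l) ^ ω₂))

/-- The tensor norm `‖Θ‖_{0,0,ω,N} = sup_{j,k,ℓ} |Θ(j,k,ℓ)| ⟨|j−k|+|j−ℓ|⟩^{2N} /
⟨|j|+|k|+|ℓ|⟩^ω`. -/
def tensorNorm00 {d : ℕ} (ω N : ℝ) (Θ : Zd d → Zd d → Zd d → ℂ) : ℝ≥0∞ :=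
  ⨆ j, ⨆ k, ⨆ l, ENNReal.ofReal
    (‖Θ j k l‖ * jb (znorm (j - k) + znorm (j - l)) ^ (2 * N) /
      jb (znorm j + znorm k + znorm l) ^ ω)

/-- The first bilinear commutator `[𝒯_Θ, b]₁(f,g) = 𝒯_Θ(bf, g) − b·𝒯_Θ(f,g)`. -/
def comm1 {d : ℕ} (Θ : Zd d → Zd d → Zd d → ℂ) (b f g : Zd d → ℂ) : Zd d → ℂ :=
  fun j => Tbil Θ (fun k => b k * f k) g j - b j * Tbil Θ f g j

/-- The second bilinear commutator `[𝒯_Θ, b]₂(f,g) = 𝒯_Θ(f, bg) − b·𝒯_Θ(f,g)`. -/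
def comm2 {d : ℕ} (Θ : Zd d → Zd d → Zd d → ℂ) (b f g : Zd d → ℂ) : Zd d → ℂ :=
  fun j => Tbil Θ f (fun l => b l * g l) j - b j * Tbil Θ f g j

/-- One-step finite difference in the variables `(j,k)`, with shift `v ∈ ℤ^d`:
`(D2 v Θ)(j,k,ℓ) = Θ(j+v, k+v, ℓ) − Θ(j,k,ℓ)`. -/
def D2 {d : ℕ} (v : Zd d) (Θ : Zd d → Zd d → Zd d → ℂ) : Zd d → Zd d → Zd d → ℂ :=
  fun j k l => Θ (j + v) (k + v) l - Θ j k l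

/-- One-step finite difference in the variables `(j,ℓ)`, with shift `v ∈ ℤ^d`:
`(D3 v Θ)(j,k,ℓ) = Θ(j+v, k, ℓ+v) − Θ(j,k,ℓ)`. -/
def D3 {d : ℕ} (v : Zd d) (Θ : Zd d → Zd d → Zd d → ℂ) : Zd d → Zd d → Zd d → ℂ :=
  fun j k l => Θ (j + v) k (l + v) - Θ j k l

/-- The iterated partial finite difference operator `Δ₂^α` for `α ∈ ℤ^d`:
in direction `m`, `Δ_{2,m}^t = (Δ₂^{m, sign t})^{|t|}`. -/
def Delta2 {d : ℕ} (α : Zd d) (Θ : Zd d → Zd d → Zd d → ℂ) : Zd d → Zd d → Zd d → ℂ :=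
  (List.finRange d).foldr
    (fun m F => (D2 (Pi.single m (Int.sign (α m))))^[(α m).natAbs] ∘ F) id Θ

/-- The iterated partial finite difference operator `Δ₃^β` for `β ∈ ℤ^d`. -/
def Delta3 {d : ℕ} (β : Zd d) (Θ : Zd d → Zd d → Zd d → ℂ) : Zd d → Zd d → Zd d → ℂ :=
  (List.finRange d).foldr
    (fun m F => (D3 (Pi.single m (Int.sign (β m))))^[(β m).natAbs] ∘ F) id Θ

/-- `|α| = Σ_m |α_m|` for `α ∈ ℤ^d`. -/
def l1norm {d : ℕ} (α : Zd d) : ℝ := ∑ m, |(α m : ℝ)|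

/-- The bilinear tensor class `BT^{ω,N}(ℤ^d)`:
`|Δ₂^α Δ₃^β Θ(j,k,ℓ)| ≤ C_{N,α,β} ⟨|j|+|k|+|ℓ|⟩^{ω−|α|−|β|} ⟨|j−k|+|j−ℓ|⟩^{−2N}`. -/
def BT {d : ℕ} (ω : ℝ) (N : ℕ) (Θ : Zd d → Zd d → Zd d → ℂ) : Prop :=
  ∀ α β : Zd d, ∃ C : ℝ, 0 < C ∧ ∀ j k l : Zd d,
    ‖Delta2 α (Delta3 β Θ) j k l‖ ≤
      C * jb (znorm j + znorm k + znorm l) ^ (ω - l1norm α - l1norm β) *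
        jb (znorm (j - k) + znorm (j - l)) ^ (-(2 * (N : ℝ)))

/-- The bilinear tensor class of order zero, `BT^0(ℤ^d) = ∪_{N > d} BT^{0,N}(ℤ^d)`. -/
def BT0 {d : ℕ} (Θ : Zd d → Zd d → Zd d → ℂ) : Prop :=
  ∃ N : ℕ, d < N ∧ BT 0 N Θ

/-- Directional derivative of a function on `ℝ^d × ℝ^d` in the direction `v`. -/
def pDeriv {d : ℕ} (v : (Fin d → ℝ) × (Fin d → ℝ))
    (F : (Fin d → ℝ) × (Fin d → ℝ) → ℂ) : (Fin d → ℝ) × (Fin d → ℝ) → ℂ :=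
  fun p => fderiv ℝ F p v

/-- Iterated partial derivative `∂_x^α` in the first group of variables. -/
def pdx {d : ℕ} (α : Fin d → ℕ) :
    ((Fin d → ℝ) × (Fin d → ℝ) → ℂ) → (Fin d → ℝ) × (Fin d → ℝ) → ℂ :=
  (List.finRange d).foldr (fun m G => (pDeriv (Pi.single m 1, 0))^[α m] ∘ G) id

/-- Iterated partial derivative `∂_y^β` in the second group of variables. -/
def pdy {d : ℕ} (β : Fin d → ℕ) :
    ((Fin d → ℝ) × (Fin d → ℝ) → ℂ) → (Fin d → ℝ) × (Fin d → ℝ) → ℂ :=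
  (List.finRange d).foldr (fun m G => (pDeriv (0, Pi.single m 1))^[β m] ∘ G) id

/-! ### Auxiliary machinery for `stmt_17` -/

section Aux17

open Polynomial

lemma poly_diff17 (p : Polynomial ℂ) (c : ℂ) :
    ∃ q : Polynomial ℂ, (q = 0 ∨ q.natDegree < p.natDegree) ∧
      ∀ x : ℂ, q.eval x = p.eval (x + c) - p.eval x := by
  refine ⟨p.comp (X + C c) - p, ?_, ?_⟩
  · rcases eq_or_ne p.natDegree 0 with h0 | h0
    · left
      obtain ⟨a, ha⟩ := natDegree_eq_zero.mp h0
      rw [← ha]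
      simp
    · right
      have hp : p ≠ 0 := fun h => h0 (by simp [h])
      have hcomp : (p.comp (X + C c)).natDegree = p.natDegree := by
        rw [natDegree_comp, natDegree_X_add_C, mul_one]
      have hlc : (p.comp (X + C c)).leadingCoeff = p.leadingCoeff := by
        rw [leadingCoeff_comp (by rw [natDegree_X_add_C]; exact one_ne_zero)]
        simp [leadingCoeff_X_add_C]
      have hcompne : p.comp (X + C c) ≠ 0 := by
        intro h
        apply hp
        rw [← leadingCoeff_eq_zero, ← hlc, h, leadingCoeff_zero]
      have hdeg : (p.comp (X + C c)).degree = p.degree := by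
        rw [degree_eq_natDegree hcompne, degree_eq_natDegree hp, hcomp]
      rcases eq_or_ne (p.comp (X + C c) - p) 0 with h | h
      · rw [h]
        simpa using Nat.pos_of_ne_zero h0
      · have h1 := degree_sub_lt hdeg hcompne hlc
        rw [hdeg] at h1
        exact natDegree_lt_natDegree h h1
  · intro x
    simp [eval_comp, add_comm]

/-- One-variable step difference on `ℤ → ℂ`. -/
def dstep17 (s : ℤ) (h : ℤ → ℂ) : ℤ → ℂ := fun x => h (x + s) - h x

lemma dstep17_poly (p : Polynomial ℂ) (s : ℤ) (t : ℕ) :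
    ∃ q : Polynomial ℂ, (q = 0 ∨ q.natDegree + t ≤ p.natDegree) ∧
      ∀ x : ℤ, (dstep17 s)^[t] (fun y : ℤ => p.eval (y : ℂ)) x = q.eval (x : ℂ) := by
  induction t with
  | zero => exact ⟨p, Or.inr (by simp), fun x => by simp⟩
  | succ t ih =>
    obtain ⟨q, hq, hev⟩ := ih
    obtain ⟨r, hr, hrev⟩ := poly_diff17 q (s : ℂ)
    refine ⟨r, ?_, ?_⟩
    · rcases hr with hr | hr
      · exact Or.inl hr
      · rcases hq with hq | hq
        · exfalso; rw [hq] at hr; simp at hr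
        · exact Or.inr (by omega)
    · intro x
      rw [Function.iterate_succ_apply']
      show (dstep17 s)^[t] (fun y : ℤ => p.eval (y : ℂ)) (x + s)
        - (dstep17 s)^[t] (fun y : ℤ => p.eval (y : ℂ)) x = r.eval (x : ℂ)
      rw [hev, hev, hrev]
      push_cast
      ring_nf

lemma dstep17_poly_zero (p : Polynomial ℂ) (s : ℤ) (t : ℕ) (ht : p.natDegree < t) :
    ∀ x : ℤ, (dstep17 s)^[t] (fun y : ℤ => p.eval (y : ℂ)) x = 0 := by
  obtain ⟨q, hq, hev⟩ := dstep17_poly p s t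
  intro x
  rw [hev]
  rcases hq with hq | hq
  · simp [hq]
  · omega

lemma jb_one_le (x : ℝ) : 1 ≤ jb x := by
  have h := Real.sqrt_le_sqrt (show (1:ℝ) ≤ 1 + x ^ 2 by nlinarith [sq_nonneg x])
  simpa [jb] using h

lemma jb_pos (x : ℝ) : 0 < jb x := lt_of_lt_of_le one_pos (jb_one_le x)

lemma abs_le_jb (x : ℝ) : |x| ≤ jb x := by
  rw [jb, ← Real.sqrt_sq_eq_abs]
  exact Real.sqrt_le_sqrt (by nlinarith)

lemma jb_mono {x y : ℝ} (hx : 0 ≤ x) (hxy : x ≤ y) : jb x ≤ jb y :=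
  Real.sqrt_le_sqrt (by nlinarith)

lemma poly_eval_bound17 (q : Polynomial ℂ) (D : ℕ) (h : q.natDegree ≤ D) :
    ∃ C : ℝ, 0 < C ∧ ∀ x : ℤ, ‖q.eval (x : ℂ)‖ ≤ C * jb |(x : ℝ)| ^ D := by
  refine ⟨(∑ i ∈ Finset.range (D + 1), ‖q.coeff i‖) + 1, by positivity, fun x => ?_⟩
  have hev := Polynomial.eval_eq_sum_range' (lt_of_le_of_lt h (Nat.lt_succ_self D)) (x : ℂ)
  rw [hev]
  calc ‖∑ i ∈ Finset.range (D + 1), q.coeff i * (x : ℂ) ^ i‖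
      ≤ ∑ i ∈ Finset.range (D + 1), ‖q.coeff i * (x : ℂ) ^ i‖ := norm_sum_le _ _
    _ ≤ ∑ i ∈ Finset.range (D + 1), ‖q.coeff i‖ * jb |(x : ℝ)| ^ D := by
        refine Finset.sum_le_sum fun i hi => ?_
        rw [norm_mul]
        refine mul_le_mul_of_nonneg_left ?_ (norm_nonneg _)
        rw [norm_pow]
        have h1 : ‖(x : ℂ)‖ = |(x : ℝ)| := by
          rw [show ((x : ℤ) : ℂ) = ((x : ℝ) : ℂ) by push_cast; ring, Complex.norm_real,
            Real.norm_eq_abs]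
        rw [h1]
        have hiD : i ≤ D := by
          have := Finset.mem_range.mp hi; omega
        calc |(x : ℝ)| ^ i ≤ jb |(x:ℝ)| ^ i := by
              refine pow_le_pow_left₀ (abs_nonneg _) ?_ i
              simpa [abs_abs] using abs_le_jb |(x:ℝ)|
          _ ≤ jb |(x:ℝ)| ^ D :=
              pow_le_pow_right₀ (jb_one_le _) hiD
    _ = (∑ i ∈ Finset.range (D + 1), ‖q.coeff i‖) * jb |(x : ℝ)| ^ D := by
        rw [← Finset.sum_mul]
    _ ≤ ((∑ i ∈ Finset.range (D + 1), ‖q.coeff i‖) + 1) * jb |(x : ℝ)| ^ D := by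
        have h2 : (0:ℝ) < jb |(x:ℝ)| ^ D := pow_pos (jb_pos _) D
        nlinarith

lemma monomial_eval17 (c : ℂ) (n : ℕ) (y : ℤ) :
    ((C c * X) ^ n).eval (y : ℂ) = (c * (y : ℂ)) ^ n := by simp

lemma monomial_natDegree_le17 (c : ℂ) (n : ℕ) : ((C c * X) ^ n).natDegree ≤ n := by
  calc ((C c * X) ^ n).natDegree ≤ n * (C c * X).natDegree := natDegree_pow_le
    _ ≤ n * 1 := by
        refine Nat.mul_le_mul_left n ?_
        calc (C c * X).natDegree ≤ X.natDegree := natDegree_C_mul_le c X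
          _ ≤ 1 := natDegree_X_le
    _ = n := mul_one n

lemma factor_bound17 (c : ℂ) (n t : ℕ) (s : ℤ) :
    ∃ C : ℝ, 0 < C ∧ ∀ x : ℤ,
      ‖(dstep17 s)^[t] (fun y : ℤ => (c * (y : ℂ)) ^ n) x‖ ≤ C * jb |(x : ℝ)| ^ (n - t) := by
  obtain ⟨q, hq, hev⟩ := dstep17_poly ((C c * X) ^ n) s t
  have hfun : (fun y : ℤ => (c * (y : ℂ)) ^ n) =
      fun y : ℤ => ((C c * X) ^ n).eval (y : ℂ) := by
    funext y; rw [monomial_eval17]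
  rcases hq with hq | hq
  · refine ⟨1, one_pos, fun x => ?_⟩
    rw [hfun, hev x, hq]
    simp [le_of_lt (pow_pos (jb_pos _) _)]
  · have hdeg : q.natDegree ≤ n - t := by
      have := monomial_natDegree_le17 c n; omega
    obtain ⟨C, hC, hb⟩ := poly_eval_bound17 q (n - t) hdeg
    refine ⟨C, hC, fun x => ?_⟩
    rw [hfun, hev x]
    exact hb x

lemma factor_zero17 (c : ℂ) (n t : ℕ) (s : ℤ) (ht : n < t) :
    ∀ x : ℤ, (dstep17 s)^[t] (fun y : ℤ => (c * (y : ℂ)) ^ n) x = 0 := by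
  intro x
  have hfun : (fun y : ℤ => (c * (y : ℂ)) ^ n) =
      fun y : ℤ => ((C c * X) ^ n).eval (y : ℂ) := by
    funext y; rw [monomial_eval17]
  rw [hfun]
  exact dstep17_poly_zero _ s t (lt_of_le_of_lt (monomial_natDegree_le17 c n) ht) x

end Aux17

section Aux17b

variable {d : ℕ}

/-- Difference of a one-argument function on `ℤ^d`. -/
def du17 (v : Zd d) (u : Zd d → ℂ) : Zd d → ℂ := fun k => u (k + v) - u k

/-- Tensor supported on `j = k + ℓ` with product values. -/
def Sten17 (u w : Zd d → ℂ) : Zd d → Zd d → Zd d → ℂ :=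
  fun j k l => if j = k + l then u k * w l else 0

lemma D2_Sten17 (v : Zd d) (u w : Zd d → ℂ) :
    D2 v (Sten17 u w) = Sten17 (du17 v u) w := by
  funext j k l
  have hiff : j + v = (k + v) + l ↔ j = k + l := by
    constructor
    · intro h
      have : j + v = (k + l) + v := by rw [h]; ring
      exact add_right_cancel this
    · intro h; rw [h]; ring
  by_cases hc : j = k + l
  · simp only [D2, Sten17, du17]
    rw [if_pos hc, if_pos (hiff.mpr hc), if_pos hc]
    ring
  · simp only [D2, Sten17, du17]
    rw [if_neg hc, if_neg (fun h => hc (hiff.mp h)), if_neg hc]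
    ring

lemma D3_Sten17 (v : Zd d) (u w : Zd d → ℂ) :
    D3 v (Sten17 u w) = Sten17 u (du17 v w) := by
  funext j k l
  have hiff : j + v = k + (l + v) ↔ j = k + l := by
    constructor
    · intro h
      have : j + v = (k + l) + v := by rw [h]; ring
      exact add_right_cancel this
    · intro h; rw [h]; ring
  by_cases hc : j = k + l
  · simp only [D3, Sten17, du17]
    rw [if_pos hc, if_pos (hiff.mpr hc), if_pos hc]
    ring
  · simp only [D3, Sten17, du17]
    rw [if_neg hc, if_neg (fun h => hc (hiff.mp h)), if_neg hc]
    ring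

lemma D2_iter_Sten17 (v : Zd d) (n : ℕ) (u w : Zd d → ℂ) :
    (D2 v)^[n] (Sten17 u w) = Sten17 ((du17 v)^[n] u) w := by
  induction n generalizing u with
  | zero => rfl
  | succ n ih =>
    rw [Function.iterate_succ_apply, Function.iterate_succ_apply, D2_Sten17, ih]

lemma D3_iter_Sten17 (v : Zd d) (n : ℕ) (u w : Zd d → ℂ) :
    (D3 v)^[n] (Sten17 u w) = Sten17 u ((du17 v)^[n] w) := by
  induction n generalizing w with
  | zero => rfl
  | succ n ih =>
    rw [Function.iterate_succ_apply, Function.iterate_succ_apply, D3_Sten17, ih]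

lemma Delta2_Sten17 (α : Zd d) (u w : Zd d → ℂ) :
    Delta2 α (Sten17 u w) =
      Sten17 ((List.finRange d).foldr
        (fun m F => (du17 (Pi.single m (Int.sign (α m))))^[(α m).natAbs] ∘ F) id u) w := by
  rw [Delta2]
  generalize List.finRange d = L
  induction L generalizing u with
  | nil => rfl
  | cons m L ih =>
    simp only [List.foldr_cons, Function.comp_apply]
    rw [ih, D2_iter_Sten17]

lemma Delta3_Sten17 (β : Zd d) (u w : Zd d → ℂ) :
    Delta3 β (Sten17 u w) =
      Sten17 u ((List.finRange d).foldr
        (fun m F => (du17 (Pi.single m (Int.sign (β m))))^[(β m).natAbs] ∘ F) id w) := by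
  rw [Delta3]
  generalize List.finRange d = L
  induction L generalizing w with
  | nil => rfl
  | cons m L ih =>
    simp only [List.foldr_cons, Function.comp_apply]
    rw [ih, D3_iter_Sten17]

/-- Product function on `ℤ^d` built from coordinate factors. -/
def Pd17 (h : Fin d → ℤ → ℂ) : Zd d → ℂ := fun k => ∏ m, h m (k m)

lemma du17_single_Pd17 (m : Fin d) (s : ℤ) (h : Fin d → ℤ → ℂ) :
    du17 (Pi.single m s) (Pd17 h) = Pd17 (Function.update h m (dstep17 s (h m))) := by
  funext k
  have hk : ∀ m' : Fin d, (k + Pi.single m s : Zd d) m' = Function.update k m (k m + s) m' := by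
    intro m'
    by_cases hm : m' = m
    · subst hm; simp
    · simp [Pi.single_apply, Function.update_of_ne hm, hm]
  have h1 : Pd17 h (k + Pi.single m s)
      = h m (k m + s) * ∏ m' ∈ Finset.univ.erase m, h m' (k m') := by
    rw [Pd17]
    rw [← Finset.mul_prod_erase Finset.univ _ (Finset.mem_univ m)]
    congr 1
    · rw [hk m]; simp
    · refine Finset.prod_congr rfl fun m' hm' => ?_
      rw [hk m', Function.update_of_ne (Finset.ne_of_mem_erase hm')]
  have h2 : Pd17 h k = h m (k m) * ∏ m' ∈ Finset.univ.erase m, h m' (k m') := by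
    rw [Pd17, ← Finset.mul_prod_erase Finset.univ _ (Finset.mem_univ m)]
  have h3 : Pd17 (Function.update h m (dstep17 s (h m))) k
      = dstep17 s (h m) (k m) * ∏ m' ∈ Finset.univ.erase m, h m' (k m') := by
    rw [Pd17, ← Finset.mul_prod_erase Finset.univ _ (Finset.mem_univ m)]
    congr 1
    · simp
    · refine Finset.prod_congr rfl fun m' hm' => ?_
      rw [Function.update_of_ne (Finset.ne_of_mem_erase hm')]
  rw [du17, h1, h2, h3, dstep17]
  ring

lemma du17_single_iter_Pd17 (m : Fin d) (s : ℤ) (n : ℕ) (h : Fin d → ℤ → ℂ) :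
    (du17 (Pi.single m s))^[n] (Pd17 h) = Pd17 (Function.update h m ((dstep17 s)^[n] (h m))) := by
  induction n generalizing h with
  | zero => simp
  | succ n ih =>
    rw [Function.iterate_succ_apply, du17_single_Pd17, ih, Function.update_self,
      Function.update_idem, ← Function.iterate_succ_apply]

lemma foldr_du17_Pd17 (L : List (Fin d)) (hL : L.Nodup) (n : Fin d → ℕ) (s : Fin d → ℤ)
    (h : Fin d → ℤ → ℂ) :
    L.foldr (fun m F => (du17 (Pi.single m (s m)))^[n m] ∘ F) id (Pd17 h)
      = Pd17 (fun m => if m ∈ L then (dstep17 (s m))^[n m] (h m) else h m) := by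
  induction L generalizing h with
  | nil => simp
  | cons m L ih =>
    have hm : m ∉ L := (List.nodup_cons.mp hL).1
    have hLn : L.Nodup := (List.nodup_cons.mp hL).2
    simp only [List.foldr_cons, Function.comp_apply]
    rw [ih hLn, du17_single_iter_Pd17]
    have harg : Function.update
          (fun m' => if m' ∈ L then (dstep17 (s m'))^[n m'] (h m') else h m') m
          ((dstep17 (s m))^[n m]
            ((fun m' => if m' ∈ L then (dstep17 (s m'))^[n m'] (h m') else h m') m))
        = fun m' => if m' ∈ m :: L then (dstep17 (s m'))^[n m'] (h m') else h m' := by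
      funext m'
      by_cases h1 : m' = m
      · subst h1
        rw [Function.update_self]
        simp [hm]
      · rw [Function.update_of_ne h1]
        by_cases h2 : m' ∈ L <;> simp [h1, h2]
    rw [harg]

end Aux17b

section Aux17c

variable {d : ℕ}

lemma znorm_nonneg (k : Zd d) : 0 ≤ znorm k := Real.sqrt_nonneg _

lemma abs_coord_le_znorm (k : Zd d) (m : Fin d) : |(k m : ℝ)| ≤ znorm k := by
  rw [znorm, ← Real.sqrt_sq_eq_abs]
  exact Real.sqrt_le_sqrt (Finset.single_le_sum (f := fun i => ((k i : ℝ)) ^ 2)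
    (fun i _ => sq_nonneg _) (Finset.mem_univ m))

/-- Bound for a product function whose factors satisfy coordinatewise bounds. -/
lemma Pd17_bound {H : Fin d → ℤ → ℂ} {Cs : Fin d → ℝ} {e : Fin d → ℕ}
    (hC : ∀ m, 0 < Cs m)
    (hb : ∀ m, ∀ x : ℤ, ‖H m x‖ ≤ Cs m * jb |(x : ℝ)| ^ (e m))
    (k : Zd d) {J : ℝ} (hJ : 0 ≤ J) (hkJ : ∀ m, |(k m : ℝ)| ≤ J) :
    ‖Pd17 H k‖ ≤ (∏ m, Cs m) * jb J ^ (∑ m, e m) := by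
  rw [Pd17, norm_prod]
  calc ∏ m, ‖H m (k m)‖ ≤ ∏ m, (Cs m * jb J ^ (e m)) := by
        refine Finset.prod_le_prod (fun m _ => norm_nonneg _) fun m _ => ?_
        refine le_trans (hb m (k m)) ?_
        refine mul_le_mul_of_nonneg_left ?_ (hC m).le
        exact pow_le_pow_left₀ (jb_pos _).le (jb_mono (abs_nonneg _) (hkJ m)) _
    _ = (∏ m, Cs m) * jb J ^ (∑ m, e m) := by
        rw [Finset.prod_mul_distrib, Finset.prod_pow_eq_pow_sum]

end Aux17c

/-- the tensor `Θ_{a,b}(j,k,ℓ) = (2πik)^a (2πiℓ)^b 1_{j=k+ℓ}` of the bilinear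
partial differential operator `T_{a,b}(F,G) = (∂^a F)(∂^b G)` belongs to
`BT^{|a|+|b|+2N, N}(ℤ^d)` for every `N ∈ ℕ`. -/
theorem stmt_17 {d : ℕ} (hd : 1 ≤ d) (a b : Fin d → ℕ) :
    ∀ N : ℕ, BT ((∑ m, (a m : ℝ)) + (∑ m, (b m : ℝ)) + 2 * N) N
      (fun j k l : Zd d =>
        if j = k + l then
          (∏ m, (2 * (Real.pi : ℂ) * Complex.I * (k m : ℂ)) ^ (a m)) *
          (∏ m, (2 * (Real.pi : ℂ) * Complex.I * (l m : ℂ)) ^ (b m))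
        else 0) := by
  intro N α β
  set c : ℂ := 2 * (Real.pi : ℂ) * Complex.I with hc_def
  set h : Fin d → ℤ → ℂ := fun m x => (c * (x : ℂ)) ^ (a m) with hh
  set g : Fin d → ℤ → ℂ := fun m x => (c * (x : ℂ)) ^ (b m) with hg
  set H : Fin d → ℤ → ℂ :=
    fun m => (dstep17 (Int.sign (α m)))^[(α m).natAbs] (h m) with hH
  set G : Fin d → ℤ → ℂ :=
    fun m => (dstep17 (Int.sign (β m)))^[(β m).natAbs] (g m) with hG
  have hTheta : (fun j k l : Zd d =>
        if j = k + l then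
          (∏ m, (2 * (Real.pi : ℂ) * Complex.I * (k m : ℂ)) ^ (a m)) *
          (∏ m, (2 * (Real.pi : ℂ) * Complex.I * (l m : ℂ)) ^ (b m))
        else 0) = Sten17 (Pd17 h) (Pd17 g) := rfl
  have key : Delta2 α (Delta3 β (Sten17 (Pd17 h) (Pd17 g))) = Sten17 (Pd17 H) (Pd17 G) := by
    rw [Delta3_Sten17, Delta2_Sten17,
      foldr_du17_Pd17 _ (List.nodup_finRange d),
      foldr_du17_Pd17 _ (List.nodup_finRange d)]
    simp [List.mem_finRange]
    rfl
  rw [hTheta]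
  -- positivity of the right-hand side weight
  have hw : ∀ (C : ℝ), 0 < C → ∀ j k l : Zd d,
      0 < C * jb (znorm j + znorm k + znorm l) ^
          ((∑ m, (a m : ℝ)) + (∑ m, (b m : ℝ)) + 2 * ↑N - l1norm α - l1norm β) *
        jb (znorm (j - k) + znorm (j - l)) ^ (-(2 * (N : ℝ))) := by
    intro C hC j k l
    have h1 := Real.rpow_pos_of_pos (jb_pos (znorm j + znorm k + znorm l))
      ((∑ m, (a m : ℝ)) + (∑ m, (b m : ℝ)) + 2 * ↑N - l1norm α - l1norm β)
    have h2 := Real.rpow_pos_of_pos (jb_pos (znorm (j - k) + znorm (j - l))) (-(2 * (N : ℝ)))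
    exact mul_pos (mul_pos hC h1) h2
  by_cases hα : ∀ m, (α m).natAbs ≤ a m
  · by_cases hβ : ∀ m, (β m).natAbs ≤ b m
    · -- main case
      choose C1 hC1 hC1b using fun m =>
        factor_bound17 c (a m) ((α m).natAbs) (Int.sign (α m))
      choose C2 hC2 hC2b using fun m =>
        factor_bound17 c (b m) ((β m).natAbs) (Int.sign (β m))
      refine ⟨(∏ m, C1 m) * (∏ m, C2 m),
        mul_pos (Finset.prod_pos fun m _ => hC1 m) (Finset.prod_pos fun m _ => hC2 m),
        fun j k l => ?_⟩
      rw [key]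
      by_cases hcase : j = k + l
      · rw [Sten17, if_pos hcase, norm_mul]
        set J : ℝ := znorm j + znorm k + znorm l with hJdef
        have hJ0 : 0 ≤ J :=
          add_nonneg (add_nonneg (znorm_nonneg j) (znorm_nonneg k)) (znorm_nonneg l)
        have hkJ : ∀ m, |(k m : ℝ)| ≤ J := fun m =>
          le_trans (abs_coord_le_znorm k m)
            (by have := znorm_nonneg j; have := znorm_nonneg l; rw [hJdef]; linarith)
        have hlJ : ∀ m, |(l m : ℝ)| ≤ J := fun m =>
          le_trans (abs_coord_le_znorm l m)
            (by have := znorm_nonneg j; have := znorm_nonneg k; rw [hJdef]; linarith)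
        have hPH := Pd17_bound hC1 hC1b k hJ0 hkJ
        have hPG := Pd17_bound hC2 hC2b l hJ0 hlJ
        set E1 : ℕ := ∑ m, (a m - (α m).natAbs) with hE1
        set E2 : ℕ := ∑ m, (b m - (β m).natAbs) with hE2
        have step1 : ‖Pd17 H k‖ * ‖Pd17 G l‖ ≤
            ((∏ m, C1 m) * (∏ m, C2 m)) * jb J ^ (E1 + E2) := by
          calc ‖Pd17 H k‖ * ‖Pd17 G l‖
              ≤ ((∏ m, C1 m) * jb J ^ E1) * ((∏ m, C2 m) * jb J ^ E2) :=
                mul_le_mul hPH hPG (norm_nonneg _)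
                  (mul_nonneg (Finset.prod_nonneg fun m _ => (hC1 m).le)
                    (pow_nonneg (jb_pos J).le _))
            _ = ((∏ m, C1 m) * (∏ m, C2 m)) * jb J ^ (E1 + E2) := by
                rw [pow_add]; ring
        -- exponent bookkeeping
        have hexp : (∑ m, (a m : ℝ)) + (∑ m, (b m : ℝ)) + 2 * ↑N - l1norm α - l1norm β
            = ((E1 + E2 : ℕ) : ℝ) + 2 * N := by
          have hl1α : l1norm α = ∑ m, (((α m).natAbs : ℕ) : ℝ) := by
            rw [l1norm]
            refine Finset.sum_congr rfl fun m _ => ?_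
            rw [Nat.cast_natAbs, Int.cast_abs]
          have hl1β : l1norm β = ∑ m, (((β m).natAbs : ℕ) : ℝ) := by
            rw [l1norm]
            refine Finset.sum_congr rfl fun m _ => ?_
            rw [Nat.cast_natAbs, Int.cast_abs]
          have hcE1 : ((E1 : ℕ) : ℝ) = (∑ m, (a m : ℝ)) - ∑ m, (((α m).natAbs : ℕ) : ℝ) := by
            rw [hE1, Nat.cast_sum, ← Finset.sum_sub_distrib]
            refine Finset.sum_congr rfl fun m _ => ?_
            rw [Nat.cast_sub (hα m)]
          have hcE2 : ((E2 : ℕ) : ℝ) = (∑ m, (b m : ℝ)) - ∑ m, (((β m).natAbs : ℕ) : ℝ) := by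
            rw [hE2, Nat.cast_sum, ← Finset.sum_sub_distrib]
            refine Finset.sum_congr rfl fun m _ => ?_
            rw [Nat.cast_sub (hβ m)]
          rw [hl1α, hl1β, Nat.cast_add, hcE1, hcE2]
          ring
        set K : ℝ := znorm (j - k) + znorm (j - l) with hKdef
        have hK0 : 0 ≤ K := add_nonneg (znorm_nonneg _) (znorm_nonneg _)
        have hKJ : K ≤ J := by
          have e1 : j - k = l := by rw [hcase]; ring
          have e2 : j - l = k := by rw [hcase]; ring
          rw [hKdef, hJdef, e1, e2]
          have := znorm_nonneg j
          linarith
        have hfac : 1 ≤ jb J ^ (2 * (N : ℝ)) * (jb K ^ (2 * (N : ℝ)))⁻¹ := by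
          have hKf : 0 < jb K ^ (2 * (N : ℝ)) := Real.rpow_pos_of_pos (jb_pos K) _
          have hle : jb K ^ (2 * (N : ℝ)) ≤ jb J ^ (2 * (N : ℝ)) :=
            Real.rpow_le_rpow (jb_pos K).le (jb_mono hK0 hKJ) (by positivity)
          calc (1 : ℝ) = jb K ^ (2 * (N : ℝ)) * (jb K ^ (2 * (N : ℝ)))⁻¹ :=
                (mul_inv_cancel₀ hKf.ne').symm
            _ ≤ jb J ^ (2 * (N : ℝ)) * (jb K ^ (2 * (N : ℝ)))⁻¹ :=
                mul_le_mul_of_nonneg_right hle (inv_nonneg.mpr hKf.le)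
        rw [hexp, Real.rpow_add (jb_pos J), Real.rpow_natCast,
          Real.rpow_neg (jb_pos K).le]
        calc ‖Pd17 H k‖ * ‖Pd17 G l‖
            ≤ ((∏ m, C1 m) * (∏ m, C2 m)) * jb J ^ (E1 + E2) := step1
          _ ≤ ((∏ m, C1 m) * (∏ m, C2 m)) * jb J ^ (E1 + E2) *
              (jb J ^ (2 * (N : ℝ)) * (jb K ^ (2 * (N : ℝ)))⁻¹) := by
              refine le_mul_of_one_le_right ?_ hfac
              have := mul_pos (Finset.prod_pos fun m (_ : m ∈ Finset.univ) => hC1 m)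
                (Finset.prod_pos fun m (_ : m ∈ Finset.univ) => hC2 m)
              exact mul_nonneg this.le (pow_nonneg (jb_pos J).le _)
          _ = (∏ m, C1 m) * (∏ m, C2 m) * (jb J ^ (E1 + E2) * jb J ^ (2 * (N : ℝ))) *
              (jb K ^ (2 * (N : ℝ)))⁻¹ := by ring
      · rw [Sten17, if_neg hcase, norm_zero]
        exact (hw _ (mul_pos (Finset.prod_pos fun m _ => hC1 m)
          (Finset.prod_pos fun m _ => hC2 m)) j k l).le
    · -- some β-factor is annihilated
      push_neg at hβ
      obtain ⟨m0, hm0⟩ := hβ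
      refine ⟨1, one_pos, fun j k l => ?_⟩
      have hG0 : Pd17 G l = 0 := by
        rw [Pd17]
        refine Finset.prod_eq_zero (Finset.mem_univ m0) ?_
        exact factor_zero17 c (b m0) ((β m0).natAbs) (Int.sign (β m0)) hm0 (l m0)
      rw [key, Sten17]
      have hz : (if j = k + l then Pd17 H k * Pd17 G l else 0) = 0 := by
        rw [hG0]
        split <;> simp
      rw [hz, norm_zero]
      exact (hw 1 one_pos j k l).le
  · -- some α-factor is annihilated
    push_neg at hα
    obtain ⟨m0, hm0⟩ := hα
    refine ⟨1, one_pos, fun j k l => ?_⟩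
    have hH0 : Pd17 H k = 0 := by
      rw [Pd17]
      refine Finset.prod_eq_zero (Finset.mem_univ m0) ?_
      exact factor_zero17 c (a m0) ((α m0).natAbs) (Int.sign (α m0)) hm0 (k m0)
    rw [key, Sten17]
    have hz : (if j = k + l then Pd17 H k * Pd17 G l else 0) = 0 := by
      rw [hH0]
      split <;> simp
    rw [hz, norm_zero]
    exact (hw 1 one_pos j k l).le


end
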